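/- The softplus function h(x) = ln(1 + e^x) satisfies condition C1: for every nonempty open interval (a,b) ⊆ ℝ, there is no constant c₁ ∈ ℝ with h'(x) = c₁ for all x ∈ (a,b), and there are no constants c₂, c₃ ∈ ℝ with (x + c₂)h'(x) + h(x) = c₃ for all x ∈ (a,b). -/

import Mathlib

open Real

/-- Condition C1: on no open interval does `h` satisfy `h'(x) = c₁`, nor
`(x + c₂) h'(x) + h(x) = c₃`, for constants `c₁, c₂, c₃`. -/
def CondC1 (h : ℝ → ℝ) : Prop :=
  ∀ a b : ℝ, a < b →
    (¬ ∃ c₁ : ℝ, ∀ x ∈ Set.Ioo a b, deriv h x = c₁) ∧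
    (¬ ∃ c₂ c₃ : ℝ, ∀ x ∈ Set.Ioo a b, (x + c₂) * deriv h x + h x = c₃)

lemma softplus_pos (x : ℝ) : (0:ℝ) < 1 + Real.exp x := by positivity

lemma softplus_hasDeriv (x : ℝ) :
    HasDerivAt (fun x : ℝ => Real.log (1 + Real.exp x))
      (Real.exp x / (1 + Real.exp x)) x := by
  have h1 : HasDerivAt (fun x : ℝ => 1 + Real.exp x) (Real.exp x) x := by
    simpa using (Real.hasDerivAt_exp x).const_add 1
  simpa using h1.log (ne_of_gt (softplus_pos x))

lemma softplus_deriv (x : ℝ) :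
    deriv (fun x : ℝ => Real.log (1 + Real.exp x)) x = Real.exp x / (1 + Real.exp x) :=
  (softplus_hasDeriv x).deriv

/-- The softplus function `h(x) = ln(1 + eˣ)` satisfies condition C1. -/
theorem stmt7 : CondC1 (fun x : ℝ => Real.log (1 + Real.exp x)) := by
  intro a b hab
  set u : ℝ := a + (b - a) / 3 with hu
  set v : ℝ := a + 2 * (b - a) / 3 with hv
  have huv : u < v := by simp only [hu, hv]; linarith
  have hu_mem : u ∈ Set.Ioo a b := by constructor <;> (simp only [hu]; linarith)
  have hv_mem : v ∈ Set.Ioo a b := by constructor <;> (simp only [hv]; linarith)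
  have hexp : Real.exp u < Real.exp v := Real.exp_lt_exp.mpr huv
  constructor
  · rintro ⟨c₁, H⟩
    have h1 := (softplus_deriv u) ▸ H u hu_mem
    have h2 := (softplus_deriv v) ▸ H v hv_mem
    have hpu := softplus_pos u
    have hpv := softplus_pos v
    rw [div_eq_iff (ne_of_gt hpu)] at h1
    rw [div_eq_iff (ne_of_gt hpv)] at h2
    nlinarith [Real.exp_pos u, Real.exp_pos v]
  · rintro ⟨c₂, c₃, H⟩
    -- rewrite H using explicit derivative
    have H' : ∀ x ∈ Set.Ioo a b,
        (x + c₂) * (Real.exp x / (1 + Real.exp x)) + Real.log (1 + Real.exp x) = c₃ := by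
      intro x hx
      have := H x hx
      rwa [softplus_deriv x] at this
    set g : ℝ → ℝ := fun x =>
      (x + c₂) * (Real.exp x / (1 + Real.exp x)) + Real.log (1 + Real.exp x) with hg
    -- derivative of g vanishes on the interval, giving x + c₂ = -2(1+eˣ)
    have key : ∀ x ∈ Set.Ioo a b, x + c₂ = -2 * (1 + Real.exp x) := by
      intro x hx
      have hpx := softplus_pos x
      have hepx := Real.exp_pos x
      have hden : HasDerivAt (fun x : ℝ => 1 + Real.exp x) (Real.exp x) x := by
        simpa using (Real.hasDerivAt_exp x).const_add 1
      have hnum : HasDerivAt (fun x : ℝ => x + c₂) 1 x := by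
        simpa using (hasDerivAt_id x).add_const c₂
      have hfrac : HasDerivAt (fun x : ℝ => Real.exp x / (1 + Real.exp x))
          ((Real.exp x * (1 + Real.exp x) - Real.exp x * Real.exp x) /
            (1 + Real.exp x) ^ 2) x :=
        (Real.hasDerivAt_exp x).div hden (ne_of_gt hpx)
      have hprod := (hnum.mul hfrac)
      have hG : HasDerivAt g
          (1 * (Real.exp x / (1 + Real.exp x)) +
            (x + c₂) * ((Real.exp x * (1 + Real.exp x) - Real.exp x * Real.exp x) /
              (1 + Real.exp x) ^ 2) + Real.exp x / (1 + Real.exp x)) x := by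
        exact hprod.add (softplus_hasDeriv x)
      have hconst : g =ᶠ[nhds x] (fun _ => c₃) := by
        filter_upwards [Ioo_mem_nhds hx.1 hx.2] with y hy using H' y hy
      have hzero : deriv g x = 0 := by
        rw [hconst.deriv_eq]; simp
      have hGval := hG.deriv
      rw [hzero] at hGval
      have hne : (1 + Real.exp x) ^ 2 ≠ 0 := by positivity
      field_simp at hGval
      have h3 : (2 * (1 + Real.exp x) + (x + c₂)) * (Real.exp x * (1 + Real.exp x) ^ 2) = 0 := by
        linear_combination -(1 + Real.exp x) ^ 2 * hGval
      have hpos : 0 < Real.exp x * (1 + Real.exp x) ^ 2 := by positivity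
      rcases mul_eq_zero.mp h3 with h | h
      · linarith
      · exact absurd h (ne_of_gt hpos)
    have k1 := key u hu_mem
    have k2 := key v hv_mem
    nlinarith
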